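/- Let (Z_n) be the aging branching process without immigration with mean offspring m = E[R] ∈ (0,∞) and non-decreasing maximal ages (a_n) with a_{n+1} ≤ a_n + 1. Then the means m_n = E[Z_n] (started from one newborn) satisfy m·m_n ≤ m_{n+1} ≤ (m+1)·m_n for all n. -/

import Mathlib

open MeasureTheory ProbabilityTheory Filter
open scoped ENNReal

/-- Pointwise layer-cake identity for natural-valued sums. -/
lemma sum_range_eq_tsum_ite {Ω : Type*} (N : Ω → ℕ) (g : ℕ → Ω → ℕ) (ω : Ω) :
    ((∑ j ∈ Finset.range (N ω), g j ω : ℕ) : ℝ≥0∞)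
      = ∑' j : ℕ, if j < N ω then (g j ω : ℝ≥0∞) else 0 := by
  rw [tsum_eq_sum (s := Finset.range (N ω))
    (by intro j hj; simp only [Finset.mem_range, not_lt] at hj; simp [Nat.not_lt.mpr hj])]
  push_cast
  exact (Finset.sum_congr rfl fun j hj => by simp [Finset.mem_range.mp hj]).symm

/-- Wald's identity for ℕ-valued i.i.d.-mean summands independent of the count. -/
lemma wald {Ω : Type*} [MeasurableSpace Ω] (μ : Measure Ω) (m : ℝ≥0∞)
    (N : Ω → ℕ) (Rf : ℕ → Ω → ℕ) (hN : Measurable N) (hR : ∀ j, Measurable (Rf j))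
    (hRm : ∀ j, ∫⁻ ω, (Rf j ω : ℝ≥0∞) ∂μ = m)
    (hindep : iIndepFun (fun o : Option ℕ => o.elim N Rf) μ) :
    ∫⁻ ω, ((∑ j ∈ Finset.range (N ω), Rf j ω : ℕ) : ℝ≥0∞) ∂μ
      = m * ∫⁻ ω, (N ω : ℝ≥0∞) ∂μ := by
  have hSmeas : ∀ j : ℕ, MeasurableSet {ω | j < N ω} := by
    intro j
    exact hN (measurableSet_Ioi (a := j))
  have hterm : ∀ j : ℕ,
      ∫⁻ ω, (if j < N ω then (Rf j ω : ℝ≥0∞) else 0) ∂μ = μ {ω | j < N ω} * m := by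
    intro j
    have hind : IndepFun (fun ω => if j < N ω then (1 : ℝ≥0∞) else 0)
        (fun ω => (Rf j ω : ℝ≥0∞)) μ := by
      have h := hindep.indepFun (i := (none : Option ℕ)) (j := some j) (by simp)
      exact h.comp (φ := fun k : ℕ => if j < k then (1 : ℝ≥0∞) else 0)
        (ψ := fun k : ℕ => (k : ℝ≥0∞)) (measurable_from_top) (measurable_from_top)
    have hmul := lintegral_mul_eq_lintegral_mul_lintegral_of_indepFun
      (f := fun ω => if j < N ω then (1 : ℝ≥0∞) else 0)
      (g := fun ω => (Rf j ω : ℝ≥0∞))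
      (Measurable.ite (hSmeas j) measurable_const measurable_const)
      (measurable_from_top.comp (hR j)) hind
    have h1 : ∫⁻ ω, (if j < N ω then (1 : ℝ≥0∞) else 0) ∂μ = μ {ω | j < N ω} := by
      rw [← lintegral_indicator_one (hSmeas j)]
      refine lintegral_congr fun ω => ?_
      by_cases h : j < N ω <;> simp [Set.indicator_apply, h]
    calc ∫⁻ ω, (if j < N ω then (Rf j ω : ℝ≥0∞) else 0) ∂μ
        = ∫⁻ ω, ((fun ω => if j < N ω then (1 : ℝ≥0∞) else 0)
            * fun ω => (Rf j ω : ℝ≥0∞)) ω ∂μ := by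
          refine lintegral_congr fun ω => ?_
          by_cases h : j < N ω <;> simp [h]
      _ = (∫⁻ ω, (if j < N ω then (1 : ℝ≥0∞) else 0) ∂μ) * ∫⁻ ω, (Rf j ω : ℝ≥0∞) ∂μ := hmul
      _ = μ {ω | j < N ω} * m := by rw [h1, hRm j]
  have hNint : ∫⁻ ω, (N ω : ℝ≥0∞) ∂μ = ∑' j : ℕ, μ {ω | j < N ω} := by
    have hpt : ∀ ω, (N ω : ℝ≥0∞) = ∑' j : ℕ, if j < N ω then (1 : ℝ≥0∞) else 0 := by
      intro ω
      simpa using sum_range_eq_tsum_ite N (fun _ _ => 1) ω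
    rw [lintegral_congr hpt, lintegral_tsum (fun j =>
      (Measurable.ite (hSmeas j) measurable_const measurable_const).aemeasurable)]
    exact tsum_congr fun j => by
      rw [← lintegral_indicator_one (hSmeas j)]
      refine lintegral_congr fun ω => ?_
      by_cases h : j < N ω <;> simp [Set.indicator_apply, h]
  calc ∫⁻ ω, ((∑ j ∈ Finset.range (N ω), Rf j ω : ℕ) : ℝ≥0∞) ∂μ
      = ∫⁻ ω, ∑' j : ℕ, (if j < N ω then (Rf j ω : ℝ≥0∞) else 0) ∂μ :=
        lintegral_congr fun ω => sum_range_eq_tsum_ite N Rf ω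
    _ = ∑' j : ℕ, ∫⁻ ω, (if j < N ω then (Rf j ω : ℝ≥0∞) else 0) ∂μ :=
        lintegral_tsum fun j =>
          (Measurable.ite (hSmeas j) (measurable_from_top.comp (hR j))
            measurable_const).aemeasurable
    _ = ∑' j : ℕ, μ {ω | j < N ω} * m := tsum_congr hterm
    _ = (∑' j : ℕ, μ {ω | j < N ω}) * m := ENNReal.tsum_mul_right
    _ = m * ∫⁻ ω, (N ω : ℝ≥0∞) ∂μ := by rw [hNint, mul_comm]

/-- For the aging branching process without immigration, with i.i.d.
offspring of mean `m ∈ (0,∞)` and non-decreasing maximal ages `a` with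
`a (n+1) ≤ a n + 1`, started from one newborn, the means `m_n = E[Z_n]` satisfy
`m·m_n ≤ m_{n+1} ≤ (m+1)·m_n`. -/
theorem stmt8 {Ω : Type*} [MeasurableSpace Ω] (μ : Measure Ω) [IsProbabilityMeasure μ]
    (m : ℝ) (hm : 0 < m)
    (a : ℕ → ℕ) (hamono : Monotone a) (hstep : ∀ n, a (n + 1) ≤ a n + 1)
    (R : ℕ → ℕ → Ω → ℕ) (hRmeas : ∀ j n, Measurable (R j n))
    (hRid : ∀ j n, IdentDistrib (R j n) (R 0 0) μ μ)
    (hRmean : ∫⁻ ω, (R 0 0 ω : ℝ≥0∞) ∂μ = ENNReal.ofReal m)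
    (Z : ℕ → ℕ → Ω → ℕ) (hZmeas : ∀ n b, Measurable (Z n b))
    (hZ00 : ∀ ω, Z 0 0 ω = 1) (hZ0 : ∀ b, 1 ≤ b → ∀ ω, Z 0 b ω = 0)
    (hshift : ∀ n b, 1 ≤ b → ∀ ω,
      Z (n + 1) b ω = if b ≤ a (n + 1) then Z n (b - 1) ω else 0)
    (hnew : ∀ n ω, Z (n + 1) 0 ω =
      ∑ j ∈ Finset.range (∑ b ∈ Finset.range (a n + 1), Z n b ω), R j (n + 1) ω)
    (hindep : ∀ n, iIndepFun
      (fun o : Option ℕ =>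
        o.elim (fun ω => ∑ b ∈ Finset.range (a n + 1), Z n b ω)
          (fun j => R j (n + 1))) μ)
    (ms : ℕ → ℝ≥0∞)
    (hms : ∀ n, ms n = ∫⁻ ω, ((∑ b ∈ Finset.range (a n + 1), Z n b ω : ℕ) : ℝ≥0∞) ∂μ) :
    ∀ n : ℕ, ENNReal.ofReal m * ms n ≤ ms (n + 1) ∧
      ms (n + 1) ≤ ENNReal.ofReal (m + 1) * ms n := by
  intro n
  set N : Ω → ℕ := fun ω => ∑ b ∈ Finset.range (a n + 1), Z n b ω with hN
  have hNmeas : Measurable N := Finset.measurable_sum _ fun b _ => hZmeas n b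
  -- the mean of each R j (n+1)
  have hRm : ∀ j, ∫⁻ ω, (R j (n + 1) ω : ℝ≥0∞) ∂μ = ENNReal.ofReal m := by
    intro j
    exact (((hRid j (n + 1)).comp (u := fun k : ℕ => (k : ℝ≥0∞))
      measurable_from_top).lintegral_eq).trans hRmean
  -- Wald: mean of newborns in generation n+1
  have hwald : ∫⁻ ω, ((Z (n + 1) 0 ω : ℕ) : ℝ≥0∞) ∂μ = ENNReal.ofReal m * ms n := by
    have := wald μ (ENNReal.ofReal m) N (fun j => R j (n + 1)) hNmeas
      (fun j => hRmeas j (n + 1)) hRm (hindep n)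
    rw [hms n]
    rw [← this]
    exact lintegral_congr fun ω => by rw [hnew n ω]
  -- decomposition of the (n+1)-st population
  have hdec : ∀ ω, ((∑ b ∈ Finset.range (a (n + 1) + 1), Z (n + 1) b ω : ℕ) : ℝ≥0∞)
      = (Z (n + 1) 0 ω : ℝ≥0∞)
        + ((∑ b ∈ Finset.range (a (n + 1)), Z n b ω : ℕ) : ℝ≥0∞) := by
    intro ω
    rw [Finset.sum_range_succ']
    push_cast
    rw [add_comm]
    congr 1
    refine Finset.sum_congr rfl fun b hb => ?_
    have hb' : b < a (n + 1) := Finset.mem_range.mp hb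
    rw [hshift n (b + 1) (Nat.le_add_left 1 b) ω]
    simp [Nat.succ_le_of_lt hb']
  set W : Ω → ℕ := fun ω => ∑ b ∈ Finset.range (a (n + 1)), Z n b ω with hW
  have hWmeas : Measurable W := Finset.measurable_sum _ fun b _ => hZmeas n b
  have hmsplit : ms (n + 1) = ENNReal.ofReal m * ms n + ∫⁻ ω, (W ω : ℝ≥0∞) ∂μ := by
    rw [hms (n + 1), lintegral_congr hdec,
      lintegral_add_left (f := fun ω => ((Z (n + 1) 0 ω : ℕ) : ℝ≥0∞))
        (measurable_from_top.comp (hZmeas (n + 1) 0)), hwald]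
  have hWle : ∫⁻ ω, (W ω : ℝ≥0∞) ∂μ ≤ ms n := by
    rw [hms n]
    refine lintegral_mono fun ω => ?_
    have : W ω ≤ N ω := by
      refine Finset.sum_le_sum_of_subset ?_
      exact Finset.range_subset_range.mpr (hstep n)
    exact Nat.cast_le.mpr this
  constructor
  · rw [hmsplit]; exact le_add_right le_rfl
  · rw [hmsplit]
    have : ENNReal.ofReal (m + 1) = ENNReal.ofReal m + 1 := by
      rw [ENNReal.ofReal_add hm.le zero_le_one, ENNReal.ofReal_one]
    rw [this, add_mul, one_mul]
    exact add_le_add le_rfl hWle
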